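/- Let μ_p and μ_q be orthonormal vectors in a real inner product space, and let c₁ = a·μ_p + r₁ and c₂ = b·μ_q + r₂ where r₁ and r₂ are each orthogonal to both μ_p and μ_q, with a ≥ 1/D and b ≥ 1/D for some D > 0. Then ‖c₁ - c₂‖ ≥ √2 / D. -/
import Mathlib


open scoped InnerProductSpace

/-- Codebook-center separation: if `c₁ = a • μp + r₁` and `c₂ = b • μq + r₂` with `μp, μq`
orthonormal, `r₁, r₂` orthogonal to both `μp` and `μq`, and `a, b ≥ 1/D` with `D > 0`,
then `‖c₁ - c₂‖ ≥ √2 / D`. -/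
theorem stmt_0 {E : Type*} [NormedAddCommGroup E] [InnerProductSpace ℝ E]
    (μp μq r₁ r₂ c₁ c₂ : E) (a b D : ℝ) (hD : 0 < D)
    (hμp : ‖μp‖ = 1) (hμq : ‖μq‖ = 1) (hortho : ⟪μp, μq⟫_ℝ = 0)
    (hr₁p : ⟪r₁, μp⟫_ℝ = 0) (hr₁q : ⟪r₁, μq⟫_ℝ = 0)
    (hr₂p : ⟪r₂, μp⟫_ℝ = 0) (hr₂q : ⟪r₂, μq⟫_ℝ = 0)
    (ha : a ≥ 1 / D) (hb : b ≥ 1 / D)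
    (hc₁ : c₁ = a • μp + r₁) (hc₂ : c₂ = b • μq + r₂) :
    ‖c₁ - c₂‖ ≥ Real.sqrt 2 / D := by
  have hpp : ⟪μp, μp⟫_ℝ = 1 := by
    rw [real_inner_self_eq_norm_sq, hμp]; norm_num
  have hqq : ⟪μq, μq⟫_ℝ = 1 := by
    rw [real_inner_self_eq_norm_sq, hμq]; norm_num
  have hqp : ⟪μq, μp⟫_ℝ = 0 := by rw [real_inner_comm]; exact hortho
  have hpr₁ : ⟪μp, r₁⟫_ℝ = 0 := by rw [real_inner_comm]; exact hr₁p
  have hqr₁ : ⟪μq, r₁⟫_ℝ = 0 := by rw [real_inner_comm]; exact hr₁q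
  have hpr₂ : ⟪μp, r₂⟫_ℝ = 0 := by rw [real_inner_comm]; exact hr₂p
  have hqr₂ : ⟪μq, r₂⟫_ℝ = 0 := by rw [real_inner_comm]; exact hr₂q
  have key : ‖c₁ - c₂‖ ^ 2 = a ^ 2 + b ^ 2 + ‖r₁ - r₂‖ ^ 2 := by
    rw [← real_inner_self_eq_norm_sq, ← real_inner_self_eq_norm_sq, hc₁, hc₂]
    simp only [inner_sub_left, inner_sub_right, inner_add_left, inner_add_right,
      real_inner_smul_left, real_inner_smul_right, hpp, hqq, hortho, hqp,
      hpr₁, hqr₁, hpr₂, hqr₂, hr₁p, hr₁q, hr₂p, hr₂q]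
    ring
  have ha' : (1 / D) ^ 2 ≤ a ^ 2 := by
    apply sq_le_sq' _ ha; nlinarith [one_div_pos.mpr hD]
  have hb' : (1 / D) ^ 2 ≤ b ^ 2 := by
    apply sq_le_sq' _ hb; nlinarith [one_div_pos.mpr hD]
  have h2 : (Real.sqrt 2 / D) ^ 2 ≤ ‖c₁ - c₂‖ ^ 2 := by
    rw [div_pow, Real.sq_sqrt (by norm_num : (2:ℝ) ≥ 0)]
    have := sq_nonneg ‖r₁ - r₂‖
    rw [key, show (2:ℝ) / D ^ 2 = (1 / D) ^ 2 + (1 / D) ^ 2 from by ring]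
    linarith [ha', hb']
  have h3 : 0 ≤ Real.sqrt 2 / D := div_nonneg (Real.sqrt_nonneg 2) hD.le
  have := Real.sqrt_le_sqrt h2
  rwa [Real.sqrt_sq h3, Real.sqrt_sq (norm_nonneg _)] at this
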